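/- Let N ≥ 1 and T ≥ 1 be integers. For i = 1,…,N and t = 1,…,T let c_i(t) ∈ ℝ, β_i ≥ 0, r_i(t) ≥ 0, and D(t) ∈ ℝ. Suppose there are dual variables μ_{i,t} (t = 1,…,T+1) with 0 ≤ μ_{i,t} ≤ β_i for all t, μ_{i,T+1} = 0, and λ_t ≥ 0 such that c_i(t) + μ_{i,t} − μ_{i,t+1} − λ_t ≥ 0 for all i and t. Then every feasible schedule s satisfies ∑_{t=1}^T ∑_{i=1}^N [c_i(t)·s_i(t) + β_i·max(s_i(t) − s_i(t−1) − r_i(t), 0)] ≥ ∑_{t=1}^T λ_t·D(t) − ∑_{t=1}^T ∑_{i=1}^N μ_{i,t}·r_i(t). -/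

import Mathlib

lemma telescope_aux (f g : ℕ → ℝ) : ∀ T : ℕ,
    ∑ t ∈ Finset.Icc 1 T, g t * (f t - f (t - 1)) =
      ∑ t ∈ Finset.Icc 1 T, (g t - g (t + 1)) * f t
        + g (T + 1) * f T - g 1 * f 0 := by
  intro T
  induction T with
  | zero => simp
  | succ T ih =>
      rw [Finset.sum_Icc_succ_top (by omega), Finset.sum_Icc_succ_top (by omega), ih]
      simp only [Nat.add_sub_cancel]
      ring

/-- Weak-duality lower bound for the offline problem with linear operational
costs and switching cost offsets. -/
theorem offline_lower_bound_offset
    (N T : ℕ) (hN : 1 ≤ N) (hT : 1 ≤ T)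
    (c : Fin N → ℕ → ℝ)
    (β : Fin N → ℝ) (hβ : ∀ i, 0 ≤ β i)
    (r : Fin N → ℕ → ℝ) (hr : ∀ i, ∀ t ∈ Finset.Icc 1 T, 0 ≤ r i t)
    (D : ℕ → ℝ)
    (μ : Fin N → ℕ → ℝ)
    (hμ : ∀ i, ∀ t ∈ Finset.Icc 1 (T + 1), 0 ≤ μ i t ∧ μ i t ≤ β i)
    (hμT : ∀ i, μ i (T + 1) = 0)
    (lam : ℕ → ℝ) (hlam : ∀ t ∈ Finset.Icc 1 T, 0 ≤ lam t)
    (hdualfeas : ∀ i, ∀ t ∈ Finset.Icc 1 T,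
      0 ≤ c i t + μ i t - μ i (t + 1) - lam t) :
    ∀ s : Fin N → ℕ → ℝ,
      (∀ i, s i 0 = 0) →
      (∀ i, ∀ t ∈ Finset.Icc 1 T, 0 ≤ s i t) →
      (∀ t ∈ Finset.Icc 1 T, D t ≤ ∑ i, s i t) →
      (∑ t ∈ Finset.Icc 1 T, lam t * D t) -
          ∑ t ∈ Finset.Icc 1 T, ∑ i, μ i t * r i t ≤
        ∑ t ∈ Finset.Icc 1 T, ∑ i,
          (c i t * s i t + β i * max (s i t - s i (t - 1) - r i t) 0) := by
  intro s hs0 hsnn hfeas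
  have hμ' : ∀ i, ∀ t ∈ Finset.Icc 1 T, 0 ≤ μ i t ∧ μ i t ≤ β i := by
    intro i t ht
    exact hμ i t (by simp only [Finset.mem_Icc] at ht ⊢; omega)
  -- Step 1: pointwise bound on the switching term
  have step1 : ∑ t ∈ Finset.Icc 1 T, ∑ i,
      (c i t * s i t + μ i t * (s i t - s i (t - 1) - r i t)) ≤
      ∑ t ∈ Finset.Icc 1 T, ∑ i,
        (c i t * s i t + β i * max (s i t - s i (t - 1) - r i t) 0) := by
    refine Finset.sum_le_sum fun t ht => Finset.sum_le_sum fun i _ => ?_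
    refine add_le_add le_rfl ?_
    set x := s i t - s i (t - 1) - r i t with hx
    obtain ⟨hμ0, hμβ⟩ := hμ' i t ht
    rcases le_total x 0 with h | h
    · rw [max_eq_right h]
      calc μ i t * x ≤ 0 := mul_nonpos_of_nonneg_of_nonpos hμ0 h
        _ = β i * 0 := by ring
    · rw [max_eq_left h]
      exact mul_le_mul_of_nonneg_right hμβ h
  -- Step 2: telescoping identity
  have tel : ∀ i : Fin N, ∑ t ∈ Finset.Icc 1 T, μ i t * (s i t - s i (t - 1)) =
      ∑ t ∈ Finset.Icc 1 T, (μ i t - μ i (t + 1)) * s i t := by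
    intro i
    rw [telescope_aux (s i) (μ i) T, hμT i, hs0 i]
    ring
  have step2 : ∑ t ∈ Finset.Icc 1 T, ∑ i,
      (c i t * s i t + μ i t * (s i t - s i (t - 1) - r i t)) =
      ∑ t ∈ Finset.Icc 1 T, ∑ i,
        ((c i t + μ i t - μ i (t + 1)) * s i t - μ i t * r i t) := by
    have lhs_eq : ∀ t, ∑ i, (c i t * s i t + μ i t * (s i t - s i (t - 1) - r i t)) =
        ∑ i, (c i t * s i t - μ i t * r i t) + ∑ i, μ i t * (s i t - s i (t - 1)) := by
      intro t
      rw [← Finset.sum_add_distrib]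
      exact Finset.sum_congr rfl fun i _ => by ring
    have rhs_eq : ∀ t, (∑ i, ((c i t + μ i t - μ i (t + 1)) * s i t - μ i t * r i t)) =
        ∑ i, (c i t * s i t - μ i t * r i t) + ∑ i, (μ i t - μ i (t + 1)) * s i t := by
      intro t
      rw [← Finset.sum_add_distrib]
      exact Finset.sum_congr rfl fun i _ => by ring
    simp only [lhs_eq, rhs_eq, Finset.sum_add_distrib]
    congr 1
    rw [Finset.sum_comm, Finset.sum_comm (s := Finset.Icc 1 T)]
    exact Finset.sum_congr rfl fun i _ => tel i
  -- Step 3: use dual feasibility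
  have step3 : ∑ t ∈ Finset.Icc 1 T, ∑ i, (lam t * s i t - μ i t * r i t) ≤
      ∑ t ∈ Finset.Icc 1 T, ∑ i,
        ((c i t + μ i t - μ i (t + 1)) * s i t - μ i t * r i t) := by
    refine Finset.sum_le_sum fun t ht => Finset.sum_le_sum fun i _ => ?_
    refine sub_le_sub_right ?_ _
    exact mul_le_mul_of_nonneg_right (by linarith [hdualfeas i t ht]) (hsnn i t ht)
  -- Step 4: demand feasibility
  have step4 : (∑ t ∈ Finset.Icc 1 T, lam t * D t) -
      ∑ t ∈ Finset.Icc 1 T, ∑ i, μ i t * r i t ≤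
      ∑ t ∈ Finset.Icc 1 T, ∑ i, (lam t * s i t - μ i t * r i t) := by
    rw [sub_eq_add_neg, ← Finset.sum_neg_distrib, ← Finset.sum_add_distrib]
    refine Finset.sum_le_sum fun t ht => ?_
    rw [Finset.sum_sub_distrib, ← Finset.mul_sum]
    rw [sub_eq_add_neg]; refine add_le_add ?_ le_rfl
    exact mul_le_mul_of_nonneg_left (hfeas t ht) (hlam t ht)
  linarith [step1, step2.le, step3, step4]
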